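/- Let X ⊆ P^n be a 0-dimensional scheme and 1 ≤ m ≤ n+1. Then for all i ∈ ℤ, HF_{Ω^m_{R_X/K}}(i) ≤ binom(n+1,m)·HF_X(i-m); in particular HF_{Ω^m_{R_X/K}}(i) ≤ binom(n+1,m)·deg(X) for all i, so the Hilbert polynomial of Ω^m_{R_X/K} is a constant. -/

import Mathlib

open MvPolynomial

set_option maxHeartbeats 1000000
set_option synthInstance.maxHeartbeats 400000

noncomputable instance extAlgModK (K R M : Type) [CommRing K] [CommRing R] [Algebra K R]
    [AddCommGroup M] [Module R M] : Module K (ExteriorAlgebra R M) :=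
  Module.compHom _ (algebraMap K R)

/-- The degree-`i` homogeneous component of the coordinate ring `R_X = S/I`. -/
noncomputable def coordPiece (K : Type) [Field K] (n : ℕ)
    (I : Ideal (MvPolynomial (Fin (n + 1)) K)) (i : ℕ) :
    Submodule K (MvPolynomial (Fin (n + 1)) K ⧸ I) :=
  Submodule.span K {g | ∃ f : MvPolynomial (Fin (n + 1)) K,
    f.IsHomogeneous i ∧ g = Ideal.Quotient.mk I f}

/-- The homogeneous component of (total) degree `i` of `Ω^m_{R_X/K}`, realized
inside the exterior algebra over `R_X` of `Ω^1_{R_X/K}`. -/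
noncomputable def omegaPiece (K : Type) [Field K] (n : ℕ)
    (I : Ideal (MvPolynomial (Fin (n + 1)) K)) (m i : ℕ) :
    Submodule K (ExteriorAlgebra (MvPolynomial (Fin (n + 1)) K ⧸ I)
      (Ω[(MvPolynomial (Fin (n + 1)) K ⧸ I)⁄K])) :=
  Submodule.span K {w | ∃ (j : ℕ) (f : MvPolynomial (Fin (n + 1)) K)
      (σ : Fin m → Fin (n + 1)),
    i = j + m ∧ f.IsHomogeneous j ∧
    w = Ideal.Quotient.mk I f •
      ExteriorAlgebra.ιMulti (MvPolynomial (Fin (n + 1)) K ⧸ I) m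
        (fun t => KaehlerDifferential.D K (MvPolynomial (Fin (n + 1)) K ⧸ I)
          (Ideal.Quotient.mk I (MvPolynomial.X (σ t))))}

namespace HFOmegaAux

variable (K : Type) [Field K] (n : ℕ) (I : Ideal (MvPolynomial (Fin (n + 1)) K))

local notation "S" => MvPolynomial (Fin (n + 1)) K
local notation "R" => MvPolynomial (Fin (n + 1)) K ⧸ I
local notation "E" => ExteriorAlgebra (MvPolynomial (Fin (n + 1)) K ⧸ I)
  (Ω[(MvPolynomial (Fin (n + 1)) K ⧸ I)⁄K])

lemma k_smul_def (c : K) (x : E) : c • x = (algebraMap K R c) • x := rfl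

noncomputable def mkL : S →ₗ[K] R := (Ideal.Quotient.mkₐ K I).toLinearMap

lemma coordPiece_eq (i : ℕ) :
    coordPiece K n I i =
      (MvPolynomial.homogeneousSubmodule (Fin (n + 1)) K i).map (mkL K n I) := by
  rw [coordPiece, ← Submodule.span_eq (MvPolynomial.homogeneousSubmodule (Fin (n + 1)) K i),
    Submodule.map_span]
  congr 1
  ext g
  simp only [Set.mem_setOf_eq, Set.mem_image, SetLike.mem_coe, mem_homogeneousSubmodule]
  constructor
  · rintro ⟨f, hf, rfl⟩; exact ⟨f, hf, rfl⟩
  · rintro ⟨f, hf, rfl⟩; exact ⟨f, hf, rfl⟩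

instance homog_fd (i : ℕ) :
    FiniteDimensional K (MvPolynomial.homogeneousSubmodule (Fin (n + 1)) K i) :=
  Submodule.finiteDimensional_of_le (S₂ := restrictTotalDegree (Fin (n + 1)) K i)
    (fun f hf => (mem_restrictTotalDegree _ _ _).mpr
      ((mem_homogeneousSubmodule _ _).mp hf).totalDegree_le)

instance coordPiece_fd (i : ℕ) : FiniteDimensional K (coordPiece K n I i) := by
  rw [coordPiece_eq]
  exact Module.Finite.map _ _

/-- smul as a `K`-linear map `R →ₗ[K] E`. -/
noncomputable def toSp (ω : E) : R →ₗ[K] E where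
  toFun a := a • ω
  map_add' a b := add_smul a b ω
  map_smul' c a := by
    show (c • a) • ω = c • (a • ω)
    rw [k_smul_def K n I c (a • ω), Algebra.smul_def c a]
    exact mul_smul (algebraMap K (MvPolynomial (Fin (n + 1)) K ⧸ I) c) a ω

lemma toSp_apply (ω : E) (a : R) : toSp K n I ω a = a • ω := rfl

/-- multiplication by `a : R` as a `K`-linear map `E →ₗ[K] E`. -/
noncomputable def mulE (a : R) : E →ₗ[K] E where
  toFun x := a • x
  map_add' x y := smul_add a x y
  map_smul' c x := by
    show a • (c • x) = c • (a • x)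
    rw [k_smul_def K n I c x, k_smul_def K n I c (a • x)]
    have h1 := mul_smul a ((algebraMap K (MvPolynomial (Fin (n + 1)) K ⧸ I)) c) x
    have h2 := mul_smul ((algebraMap K (MvPolynomial (Fin (n + 1)) K ⧸ I)) c) a x
    rw [mul_comm] at h1
    exact h1.symm.trans h2

lemma mulE_apply (a : R) (x : E) : mulE K n I a x = a • x := rfl

/-- The basic wedge element attached to an index map. -/
noncomputable def W (m : ℕ) (σ : Fin m → Fin (n + 1)) : E :=
  ExteriorAlgebra.ιMulti R m
    (fun t => KaehlerDifferential.D K R (Ideal.Quotient.mk I (MvPolynomial.X (σ t))))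

lemma smul_W_mem (m j : ℕ) (σ : Fin m → Fin (n + 1)) (v : R)
    (hv : v ∈ coordPiece K n I j) : v • W K n I m σ ∈ omegaPiece K n I m (j + m) := by
  induction hv using Submodule.span_induction with
  | mem x hx =>
      obtain ⟨f, hf, rfl⟩ := hx
      exact Submodule.subset_span ⟨j, f, σ, rfl, hf, rfl⟩
  | zero =>
      have h0 : (0 : MvPolynomial (Fin (n + 1)) K ⧸ I) • W K n I m σ = 0 := by
        rw [← toSp_apply]; exact map_zero _
      rw [h0]; exact zero_mem _
  | add x y hx hy ihx ihy =>
      have ha : (x + y) • W K n I m σ = x • W K n I m σ + y • W K n I m σ := by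
        rw [← toSp_apply, ← toSp_apply, ← toSp_apply]; exact map_add _ x y
      rw [ha]; exact add_mem ihx ihy
  | smul c x hx ihx =>
      have hs : (c • x) • W K n I m σ = c • (x • W K n I m σ) := by
        rw [← toSp_apply, ← toSp_apply]; exact map_smul _ c x
      rw [hs]
      exact Submodule.smul_mem _ _ ihx

noncomputable def Phi (m j : ℕ) :
    ({s : Finset (Fin (n + 1)) // s.card = m} → coordPiece K n I j) →ₗ[K] E :=
  ∑ s : {s : Finset (Fin (n + 1)) // s.card = m},
    (toSp K n I (W K n I m (fun t => s.1.orderEmbOfFin s.2 t))).comp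
      ((coordPiece K n I j).subtype.comp (LinearMap.proj s))

lemma Phi_single (m j : ℕ) (a : {s : Finset (Fin (n + 1)) // s.card = m})
    (v : coordPiece K n I j) :
    Phi K n I m j (Pi.single a v) =
      (v : MvPolynomial (Fin (n + 1)) K ⧸ I) • W K n I m (fun t => a.1.orderEmbOfFin a.2 t) := by
  rw [Phi, LinearMap.sum_apply]
  rw [Finset.sum_eq_single a]
  · rw [LinearMap.comp_apply, LinearMap.comp_apply, LinearMap.proj_apply, Pi.single_eq_same]
    rfl
  · intro b _ hb
    rw [LinearMap.comp_apply, LinearMap.comp_apply, LinearMap.proj_apply,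
      Pi.single_eq_of_ne hb, map_zero, map_zero]
  · intro h; exact absurd (Finset.mem_univ a) h

lemma omegaPiece_le_range (m j : ℕ) :
    omegaPiece K n I m (j + m) ≤ LinearMap.range (Phi K n I m j) := by
  rw [omegaPiece]
  apply Submodule.span_le.mpr
  rintro w ⟨j', f, σ, hj, hf, rfl⟩
  have hf' : f.IsHomogeneous j := by
    have hjj : j' = j := by omega
    rwa [hjj] at hf
  show Ideal.Quotient.mk I f • W K n I m σ ∈ LinearMap.range (Phi K n I m j)
  have hfmem : Ideal.Quotient.mk I f ∈ coordPiece K n I j :=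
    Submodule.subset_span ⟨f, hf', rfl⟩
  by_cases hinj : Function.Injective σ
  · set s : Finset (Fin (n + 1)) := Finset.univ.image σ with hs
    have hcard : s.card = m := by
      rw [hs, Finset.card_image_of_injective _ hinj, Finset.card_univ, Fintype.card_fin]
    have hmem : ∀ t, σ t ∈ s := fun t => by
      rw [hs]; exact Finset.mem_image_of_mem σ (Finset.mem_univ t)
    set e' : Fin m → Fin m := fun t => (s.orderIsoOfFin hcard).symm ⟨σ t, hmem t⟩ with he'def
    have he' : Function.Injective e' := by
      intro a b h
      apply hinj
      have := congrArg (fun z => ((s.orderIsoOfFin hcard) z : Fin (n + 1))) h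
      simpa [he'def] using this
    let e : Equiv.Perm (Fin m) := Equiv.ofBijective e' (Finite.injective_iff_bijective.mp he')
    have hcomp : ∀ t, s.orderEmbOfFin hcard (e t) = σ t := by
      intro t
      show s.orderEmbOfFin hcard (e' t) = σ t
      rw [← Finset.coe_orderIsoOfFin_apply, he'def]
      simp
    have hfam : (fun t => KaehlerDifferential.D K R (Ideal.Quotient.mk I (MvPolynomial.X (σ t))))
        = (fun t => KaehlerDifferential.D K R
            (Ideal.Quotient.mk I (MvPolynomial.X (s.orderEmbOfFin hcard t)))) ∘ e := by
      funext t
      simp only [Function.comp_apply, hcomp t]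
    have hperm := (ExteriorAlgebra.ιMulti R m).map_perm
      (fun t => KaehlerDifferential.D K R
        (Ideal.Quotient.mk I (MvPolynomial.X (s.orderEmbOfFin hcard t)))) e
    have hW0 : W K n I m σ = Equiv.Perm.sign e • W K n I m (fun t => s.orderEmbOfFin hcard t) := by
      rw [W, hfam, hperm, W]
    rcases Int.units_eq_one_or (Equiv.Perm.sign e) with hsgn | hsgn
    · rw [hsgn, one_smul] at hW0
      refine ⟨Pi.single ⟨s, hcard⟩ ⟨Ideal.Quotient.mk I f, hfmem⟩, ?_⟩
      rw [Phi_single]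
      show Ideal.Quotient.mk I f • W K n I m (fun t => s.orderEmbOfFin hcard t) = _
      rw [hW0]
    · rw [hsgn, Units.smul_def, Units.val_neg, Units.val_one, neg_smul, one_smul] at hW0
      refine ⟨Pi.single ⟨s, hcard⟩ ⟨-(Ideal.Quotient.mk I f), neg_mem hfmem⟩, ?_⟩
      rw [Phi_single]
      show (-(Ideal.Quotient.mk I f)) • W K n I m (fun t => s.orderEmbOfFin hcard t) = _
      rw [hW0]
      exact (neg_smul (Ideal.Quotient.mk I f) (W K n I m (fun t => s.orderEmbOfFin hcard t))).trans
        (smul_neg (Ideal.Quotient.mk I f) (W K n I m (fun t => s.orderEmbOfFin hcard t))).symm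
  · have hnotinj : ¬ Function.Injective
        (fun t => KaehlerDifferential.D K R (Ideal.Quotient.mk I (MvPolynomial.X (σ t)))) := by
      intro h
      apply hinj
      intro a b hab
      exact h (by simp only [hab])
    have hz : W K n I m σ = 0 := by
      rw [W]
      exact AlternatingMap.map_eq_zero_of_not_injective _ _ hnotinj
    rw [hz, smul_zero]
    exact zero_mem _

end HFOmegaAux

namespace HFOmegaAux

variable (K : Type) [Field K] (n : ℕ) (I : Ideal (MvPolynomial (Fin (n + 1)) K))

local notation "S" => MvPolynomial (Fin (n + 1)) K
local notation "R" => MvPolynomial (Fin (n + 1)) K ⧸ I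
local notation "E" => ExteriorAlgebra (MvPolynomial (Fin (n + 1)) K ⧸ I)
  (Ω[(MvPolynomial (Fin (n + 1)) K ⧸ I)⁄K])

lemma omegaPiece_eq_bot (m i : ℕ) (h : i < m) : omegaPiece K n I m i = ⊥ := by
  rw [omegaPiece, Submodule.span_eq_bot]
  rintro x ⟨j, f, σ, hj, -, -⟩
  omega

instance omegaPiece_fd (m i : ℕ) : FiniteDimensional K (omegaPiece K n I m i) := by
  rcases lt_or_ge i m with h | h
  · rw [omegaPiece_eq_bot K n I m i h]
    infer_instance
  · have hi : i = (i - m) + m := by omega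
    rw [hi]
    exact Submodule.finiteDimensional_of_le (omegaPiece_le_range K n I m (i - m))

lemma finrank_omegaPiece_le (m i : ℕ) (h : m ≤ i) :
    Module.finrank K (omegaPiece K n I m i) ≤
      Nat.choose (n + 1) m * Module.finrank K (coordPiece K n I (i - m)) := by
  have hi : i = (i - m) + m := by omega
  have h1 : Module.finrank K (omegaPiece K n I m i) ≤
      Module.finrank K (LinearMap.range (Phi K n I m (i - m))) := by
    conv_lhs => rw [hi]
    exact Submodule.finrank_mono (omegaPiece_le_range K n I m (i - m))
  have h2 : Module.finrank K (LinearMap.range (Phi K n I m (i - m))) ≤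
      Module.finrank K ({s : Finset (Fin (n + 1)) // s.card = m} → coordPiece K n I (i - m)) :=
    LinearMap.finrank_range_le _
  have h3 : Module.finrank K
      ({s : Finset (Fin (n + 1)) // s.card = m} → coordPiece K n I (i - m)) =
      Nat.choose (n + 1) m * Module.finrank K (coordPiece K n I (i - m)) := by
    rw [Module.finrank_pi_fintype, Finset.sum_const, Finset.card_univ, smul_eq_mul]
    congr 1
    rw [Fintype.card_finset_len, Fintype.card_fin]
  omega

/-- multiplication by `x₀` on `R`, as a `K`-linear map. -/
noncomputable def mulX0 : R →ₗ[K] R :=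
  LinearMap.mulLeft K (Ideal.Quotient.mk I (MvPolynomial.X 0))

lemma mulX0_maps (d : ℕ) : ∀ x ∈ coordPiece K n I d,
    mulX0 K n I x ∈ coordPiece K n I (d + 1) := by
  intro x hx
  induction hx using Submodule.span_induction with
  | mem y hy =>
      obtain ⟨f, hf, rfl⟩ := hy
      refine Submodule.subset_span ⟨MvPolynomial.X 0 * f, ?_, ?_⟩
      · simpa [add_comm] using (MvPolynomial.isHomogeneous_X K (0 : Fin (n + 1))).mul hf
      · simp [mulX0, LinearMap.mulLeft_apply, map_mul]
  | zero => rw [map_zero]; exact zero_mem _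
  | add y z hy hz ihy ihz => rw [map_add]; exact add_mem ihy ihz
  | smul c y hy ihy => rw [map_smul]; exact Submodule.smul_mem _ _ ihy

noncomputable def mulX0r (d : ℕ) : coordPiece K n I d →ₗ[K] coordPiece K n I (d + 1) :=
  (mulX0 K n I).restrict (mulX0_maps K n I d)

lemma mulX0r_inj
    (hx0 : ∀ r : R, Ideal.Quotient.mk I (MvPolynomial.X 0) * r = 0 → r = 0) (d : ℕ) :
    Function.Injective (mulX0r K n I d) := by
  intro a b h
  have h' : mulX0 K n I (a : R) = mulX0 K n I (b : R) := congrArg Subtype.val h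
  have hz : Ideal.Quotient.mk I (MvPolynomial.X 0) * ((a : R) - (b : R)) = 0 := by
    rw [mul_sub]
    simpa [mulX0, LinearMap.mulLeft_apply] using sub_eq_zero_of_eq h'
  exact Subtype.ext (sub_eq_zero.mp (hx0 _ hz))

lemma finrank_coordPiece_mono
    (hx0 : ∀ r : R, Ideal.Quotient.mk I (MvPolynomial.X 0) * r = 0 → r = 0) (d : ℕ) :
    Module.finrank K (coordPiece K n I d) ≤ Module.finrank K (coordPiece K n I (d + 1)) :=
  LinearMap.finrank_le_finrank_of_injective (mulX0r_inj K n I hx0 d)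

lemma finrank_coordPiece_mono'
    (hx0 : ∀ r : R, Ideal.Quotient.mk I (MvPolynomial.X 0) * r = 0 → r = 0) (d k : ℕ) :
    Module.finrank K (coordPiece K n I d) ≤ Module.finrank K (coordPiece K n I (d + k)) := by
  induction k with
  | zero => rfl
  | succ k ih => exact ih.trans (finrank_coordPiece_mono K n I hx0 (d + k))

lemma mulX0r_surj
    (hx0 : ∀ r : R, Ideal.Quotient.mk I (MvPolynomial.X 0) * r = 0 → r = 0) (d : ℕ)
    (heq : Module.finrank K (coordPiece K n I d) = Module.finrank K (coordPiece K n I (d + 1))) :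
    Function.Surjective (mulX0r K n I d) := by
  have h1 : Module.finrank K (LinearMap.range (mulX0r K n I d)) =
      Module.finrank K (coordPiece K n I (d + 1)) := by
    rw [LinearMap.finrank_range_of_inj (mulX0r_inj K n I hx0 d), heq]
  exact LinearMap.range_eq_top.mp (Submodule.eq_top_of_finrank_eq h1)

lemma omegaPiece_step (m j : ℕ)
    (hsurj : Function.Surjective (mulX0r K n I j)) :
    omegaPiece K n I m ((j + 1) + m) ≤
      Submodule.map (mulE K n I (Ideal.Quotient.mk I (MvPolynomial.X 0)))
        (omegaPiece K n I m (j + m)) := by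
  rw [omegaPiece]
  apply Submodule.span_le.mpr
  rintro w ⟨j', f, σ, hj, hf, rfl⟩
  have hf' : f.IsHomogeneous (j + 1) := by
    have hjj : j' = j + 1 := by omega
    rwa [hjj] at hf
  have hfmem : Ideal.Quotient.mk I f ∈ coordPiece K n I (j + 1) :=
    Submodule.subset_span ⟨f, hf', rfl⟩
  obtain ⟨⟨v, hv⟩, hveq⟩ := hsurj ⟨Ideal.Quotient.mk I f, hfmem⟩
  have hveq' : Ideal.Quotient.mk I (MvPolynomial.X 0) * v = Ideal.Quotient.mk I f :=
    congrArg Subtype.val hveq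
  refine ⟨v • W K n I m σ, smul_W_mem K n I m j σ v hv, ?_⟩
  show Ideal.Quotient.mk I (MvPolynomial.X 0) • (v • W K n I m σ) =
    Ideal.Quotient.mk I f • W K n I m σ
  rw [← hveq']
  exact (mul_smul (Ideal.Quotient.mk I (MvPolynomial.X 0)) v (W K n I m σ)).symm

lemma finrank_omegaPiece_step (m j : ℕ)
    (hsurj : Function.Surjective (mulX0r K n I j)) :
    Module.finrank K (omegaPiece K n I m ((j + 1) + m)) ≤
      Module.finrank K (omegaPiece K n I m (j + m)) :=
  (Submodule.finrank_mono (omegaPiece_step K n I m j hsurj)).trans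
    (Submodule.finrank_map_le _ _)

end HFOmegaAux

theorem hilbert_function_omega_bounded (K : Type) [Field K] [CharZero K] (n : ℕ)
    (I : Ideal (MvPolynomial (Fin (n + 1)) K))
    (hI : ∀ f ∈ I, ∀ d : ℕ, MvPolynomial.homogeneousComponent d f ∈ I)
    (hx0 : ∀ r : MvPolynomial (Fin (n + 1)) K ⧸ I,
      Ideal.Quotient.mk I (MvPolynomial.X 0) * r = 0 → r = 0)
    (δ r : ℕ) (hδ : ∀ i : ℕ, r ≤ i → Module.finrank K (coordPiece K n I i) = δ)
    (m : ℕ) (hm : 1 ≤ m) (hmn : m ≤ n + 1) :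
    (∀ i : ℕ, m ≤ i →
      Module.finrank K (omegaPiece K n I m i) ≤
        Nat.choose (n + 1) m * Module.finrank K (coordPiece K n I (i - m))) ∧
    (∀ i : ℕ, Module.finrank K (omegaPiece K n I m i) ≤ Nat.choose (n + 1) m * δ) ∧
    (∃ (c N : ℕ), ∀ i : ℕ, N ≤ i →
      Module.finrank K (omegaPiece K n I m i) = c) := by
  classical
  have b1 : ∀ i : ℕ, m ≤ i →
      Module.finrank K (omegaPiece K n I m i) ≤
        Nat.choose (n + 1) m * Module.finrank K (coordPiece K n I (i - m)) :=
    fun i hi => HFOmegaAux.finrank_omegaPiece_le K n I m i hi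
  have hcle : ∀ d : ℕ, Module.finrank K (coordPiece K n I d) ≤ δ := by
    intro d
    have h := HFOmegaAux.finrank_coordPiece_mono' K n I hx0 d r
    rwa [hδ (d + r) (by omega)] at h
  have b2 : ∀ i : ℕ,
      Module.finrank K (omegaPiece K n I m i) ≤ Nat.choose (n + 1) m * δ := by
    intro i
    rcases lt_or_ge i m with h | h
    · rw [HFOmegaAux.omegaPiece_eq_bot K n I m i h, finrank_bot]
      exact Nat.zero_le _
    · exact (b1 i h).trans (Nat.mul_le_mul_left _ (hcle (i - m)))
  refine ⟨b1, b2, ?_⟩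
  have hsurj : ∀ j : ℕ, r ≤ j → Function.Surjective (HFOmegaAux.mulX0r K n I j) :=
    fun j hj => HFOmegaAux.mulX0r_surj K n I hx0 j
      (by rw [hδ j hj, hδ (j + 1) (by omega)])
  set a : ℕ → ℕ := fun k => Module.finrank K (omegaPiece K n I m ((r + k) + m)) with ha
  have hstep : ∀ k, a (k + 1) ≤ a k := by
    intro k
    have h1 : r + (k + 1) = (r + k) + 1 := by omega
    show Module.finrank K (omegaPiece K n I m ((r + (k + 1)) + m)) ≤ _
    rw [h1]
    exact HFOmegaAux.finrank_omegaPiece_step K n I m (r + k) (hsurj _ (by omega))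
  have hanti : ∀ p l : ℕ, a (p + l) ≤ a p := by
    intro p l
    induction l with
    | zero => rfl
    | succ l ih => exact le_trans (by rw [← Nat.add_assoc]; exact hstep (p + l)) ih
  have hne : (Set.range a).Nonempty := ⟨a 0, 0, rfl⟩
  obtain ⟨N₀, hN₀⟩ := Nat.sInf_mem hne
  refine ⟨sInf (Set.range a), r + N₀ + m, fun i hi => ?_⟩
  have h1 : a (N₀ + (i - m - r - N₀)) ≤ sInf (Set.range a) := by
    rw [← hN₀]; exact hanti N₀ _
  have h2 : sInf (Set.range a) ≤ a (N₀ + (i - m - r - N₀)) := Nat.sInf_le ⟨_, rfl⟩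
  have h3 : a (N₀ + (i - m - r - N₀)) = sInf (Set.range a) := le_antisymm h1 h2
  rw [← h3]
  show Module.finrank K (omegaPiece K n I m i) =
    Module.finrank K (omegaPiece K n I m ((r + (N₀ + (i - m - r - N₀))) + m))
  rw [show (r + (N₀ + (i - m - r - N₀))) + m = i from by omega]
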